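/- Let n ≥ 1, let A ∈ GL_n(ℂ), and let Q(X) = X^p − c_{p−1}X^{p−1} − ⋯ − c_1X − c_0 ∈ ℂ[X] be a monic polynomial of degree p ≥ 1 with Q(A) = 0 and c_0 ≠ 0. Let C_Q be the companion matrix of Q and c := (c_{p−1}, c_{p−2}, …, c_0) ∈ ℂ^p. Then there exist a C-flow φ of A and a C-flow ψ of C_Q, both with all entry functions analytic on ℂ, such that for every z ∈ ℂ one has φ(z) = Σ_{i=1}^p (ψ(z)·c)_i · A^{−i}, where ψ(z)·c denotes the matrix–vector product. -/

import Mathlib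

/-- The companion matrix of the monic polynomial
`X^p − c_{p−1}X^{p−1} − ⋯ − c_1 X − c_0` (where `c i` is the coefficient `c_i`):
its first column is `(c_{p−1}, …, c_0)ᵗ`, its `(i, i+1)` entries are `1`,
and all other entries are `0`. -/
def companionOf (p : ℕ) (c : Fin p → ℂ) : Matrix (Fin p) (Fin p) ℂ :=
  Matrix.of fun i j : Fin p =>
    if (j : ℕ) = (i : ℕ) + 1 then 1 else if (j : ℕ) = 0 then c i.rev else 0

namespace CFlowAux

open Polynomial NormedSpace Matrix

lemma companionOf_apply (p : ℕ) (c : Fin p → ℂ) (i j : Fin p) :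
    companionOf p c i j
      = (if (j:ℕ) = (i:ℕ)+1 then 1 else 0) + (if (j:ℕ) = 0 then c i.rev else 0) := by
  simp only [companionOf, Matrix.of_apply]
  by_cases h1 : (j:ℕ) = (i:ℕ)+1
  · rw [if_pos h1, if_pos h1, if_neg (by omega), add_zero]
  · rw [if_neg h1, if_neg h1, zero_add]

lemma sum_ite_coe {M : Type*} [AddCommMonoid M] (p k : ℕ) (g : Fin p → M) :
    (∑ j : Fin p, if (j:ℕ) = k then g j else 0) = if h : k < p then g ⟨k, h⟩ else 0 := by
  by_cases h : k < p
  · rw [dif_pos h, Finset.sum_eq_single (⟨k, h⟩ : Fin p)]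
    · rw [if_pos rfl]
    · intro b _ hb
      exact if_neg (fun hc => hb (Fin.ext hc))
    · intro h'; exact absurd (Finset.mem_univ _) h'
  · rw [dif_neg h, Finset.sum_eq_zero]
    intro j _
    refine if_neg (fun hc => ?_)
    have := j.isLt; omega

lemma companion_mulVec (p : ℕ) (hp : 1 ≤ p) (c : Fin p → ℂ) (v : Fin p → ℂ) (i : Fin p) :
    (companionOf p c).mulVec v i
      = (if h : (i:ℕ)+1 < p then v ⟨(i:ℕ)+1, h⟩ else 0) + c i.rev * v ⟨0, hp⟩ := by
  simp only [Matrix.mulVec, dotProduct, companionOf_apply, add_mul, ite_mul, one_mul, zero_mul]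
  rw [Finset.sum_add_distrib]
  congr 1
  · exact sum_ite_coe p ((i:ℕ)+1) v
  · rw [show (∑ j : Fin p, if (j:ℕ) = 0 then c i.rev * v j else 0)
        = if h : 0 < p then c i.rev * v ⟨0, h⟩ else 0 from sum_ite_coe p 0 (fun j => c i.rev * v j)]
    exact dif_pos (by omega)

variable {n p : ℕ} (A : Matrix (Fin n) (Fin n) ℂ)

lemma identZ (hdet : IsUnit A.det) (hp : 1 ≤ p) (c : Fin p → ℂ)
    (h1 : A ^ p = ∑ i : Fin p, c i • A ^ (i:ℕ)) :
    ∑ i : Fin p, c i.rev • A ^ (-1 - (i:ℤ)) = 1 := by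
  have hiz : ∀ i : Fin p, (-1 - ((i.rev : Fin p):ℤ)) = (i:ℤ) - p := by
    intro i
    have h2 : ((i.rev : Fin p) : ℕ) = p - (i + 1) := Fin.val_rev i
    have h3 := i.isLt
    omega
  have e1 : ∑ i : Fin p, c i.rev • A ^ (-1 - (i:ℤ))
      = ∑ i : Fin p, c i • A ^ ((i:ℤ) - p) := by
    rw [← Equiv.sum_comp Fin.revPerm (fun i : Fin p => c i.rev • A ^ (-1 - (i:ℤ)))]
    refine Finset.sum_congr rfl (fun x _ => ?_)
    simp only [Fin.revPerm_apply, Fin.rev_rev]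
    rw [hiz x]
  rw [e1]
  have e2 : ∀ i : Fin p, A ^ ((i:ℤ) - p) = A ^ (i:ℕ) * A ^ (-(p:ℤ)) := by
    intro i
    rw [sub_eq_add_neg, Matrix.zpow_add hdet, zpow_natCast]
  calc ∑ i : Fin p, c i • A ^ ((i:ℤ) - p)
      = (∑ i : Fin p, c i • A ^ (i:ℕ)) * A ^ (-(p:ℤ)) := by
        rw [Finset.sum_mul]
        exact Finset.sum_congr rfl (fun i _ => by rw [e2 i, smul_mul_assoc])
    _ = A ^ p * A ^ (-(p:ℤ)) := by rw [← h1]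
    _ = 1 := by
        rw [← zpow_natCast A p, ← Matrix.zpow_add hdet, add_neg_cancel, zpow_zero]

lemma step (hdet : IsUnit A.det) (hp : 1 ≤ p) (c : Fin p → ℂ)
    (h1 : A ^ p = ∑ i : Fin p, c i • A ^ (i:ℕ)) (w : Fin p → ℂ) :
    ∑ i : Fin p, (companionOf p c).mulVec w i • A ^ (-1 - (i:ℤ))
      = A * ∑ i : Fin p, w i • A ^ (-1 - (i:ℤ)) := by
  obtain ⟨m, rfl⟩ : ∃ m, p = m + 1 := ⟨p - 1, by omega⟩
  set W : ℕ → ℂ := fun k => if h : k < m + 1 then w ⟨k, h⟩ else 0 with hW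
  have lhs_eq : ∑ i : Fin (m+1), (companionOf (m+1) c).mulVec w i • A ^ (-1 - (i:ℤ))
      = (∑ k ∈ Finset.range (m+1), W (k+1) • A ^ (-1 - (k:ℤ)))
        + w ⟨0, hp⟩ • (∑ i : Fin (m+1), c i.rev • A ^ (-1 - (i:ℤ))) := by
    rw [Finset.smul_sum]
    rw [← Fin.sum_univ_eq_sum_range (fun k => W (k+1) • A ^ (-1 - (k:ℤ))) (m+1)]
    rw [← Finset.sum_add_distrib]
    refine Finset.sum_congr rfl (fun i _ => ?_)
    rw [companion_mulVec (m+1) hp c w i, add_smul, smul_smul,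
      mul_comm (w ⟨0, hp⟩) (c i.rev)]
  have rhs_eq : A * ∑ i : Fin (m+1), w i • A ^ (-1 - (i:ℤ))
      = ∑ k ∈ Finset.range (m+1), W k • A ^ (-(k:ℤ)) := by
    rw [Finset.mul_sum]
    rw [← Fin.sum_univ_eq_sum_range (fun k => W k • A ^ (-(k:ℤ))) (m+1)]
    refine Finset.sum_congr rfl (fun i _ => ?_)
    rw [mul_smul_comm]
    have : A * A ^ (-1 - (i:ℤ)) = A ^ (-(i:ℤ)) := by
      rw [← Matrix.zpow_one_add hdet]
      congr 1; ring
    rw [this]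
    congr 1
    simp only [hW]
    rw [dif_pos i.isLt]
  rw [lhs_eq, identZ A hdet hp c h1, rhs_eq]
  rw [Finset.sum_range_succ, Finset.sum_range_succ']
  have hWm : W (m+1) = 0 := dif_neg (by omega)
  have hW0 : W 0 = w ⟨0, hp⟩ := dif_pos (Nat.succ_pos m)
  rw [hWm, zero_smul, add_zero]
  congr 1
  · refine Finset.sum_congr rfl (fun k _ => ?_)
    congr 1
    push_cast
    ring

lemma G_aeval (hdet : IsUnit A.det) (hp : 1 ≤ p) (c : Fin p → ℂ)
    (h1 : A ^ p = ∑ i : Fin p, c i • A ^ (i:ℕ)) (q : ℂ[X]) :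
    ∑ i : Fin p, (aeval (companionOf p c) q).mulVec (fun j : Fin p => c j.rev) i
        • A ^ (-1 - (i:ℤ))
      = aeval A q := by
  have hpow : ∀ k : ℕ, ∑ i : Fin p, ((companionOf p c) ^ k).mulVec
      (fun j : Fin p => c j.rev) i • A ^ (-1 - (i:ℤ)) = A ^ k := by
    intro k
    induction k with
    | zero =>
      simp only [pow_zero, Matrix.one_mulVec]
      exact identZ A hdet hp c h1
    | succ k ih =>
      rw [pow_succ']
      have : ((companionOf p c) * (companionOf p c) ^ k).mulVec (fun j : Fin p => c j.rev)
          = (companionOf p c).mulVec (((companionOf p c) ^ k).mulVec (fun j : Fin p => c j.rev)) := by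
        rw [Matrix.mulVec_mulVec]
      rw [this, step A hdet hp c h1, ih, pow_succ']
  induction q using Polynomial.induction_on' with
  | add f g hf hg =>
    rw [map_add, map_add]
    rw [← hf, ← hg, ← Finset.sum_add_distrib]
    refine Finset.sum_congr rfl (fun i _ => ?_)
    rw [Matrix.add_mulVec, Pi.add_apply, add_smul]
  | monomial k a =>
    rw [aeval_monomial, aeval_monomial]
    have halg : (algebraMap ℂ (Matrix (Fin p) (Fin p) ℂ)) a * (companionOf p c) ^ k
        = a • ((companionOf p c) ^ k) := by rw [Algebra.smul_def]
    rw [halg]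
    have : ∀ i : Fin p, (a • ((companionOf p c) ^ k)).mulVec (fun j : Fin p => c j.rev) i
        = a * ((companionOf p c) ^ k).mulVec (fun j : Fin p => c j.rev) i := by
      intro i
      rw [Matrix.smul_mulVec]
      rfl
    calc ∑ i : Fin p, (a • ((companionOf p c) ^ k)).mulVec (fun j : Fin p => c j.rev) i
          • A ^ (-1 - (i:ℤ))
        = a • ∑ i : Fin p, ((companionOf p c) ^ k).mulVec (fun j : Fin p => c j.rev) i
          • A ^ (-1 - (i:ℤ)) := by
          rw [Finset.smul_sum]
          exact Finset.sum_congr rfl (fun i _ => by rw [this i, mul_smul])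
      _ = a • A ^ k := by rw [hpow k]
      _ = (algebraMap ℂ (Matrix (Fin n) (Fin n) ℂ)) a * A ^ k := by rw [Algebra.smul_def]

lemma companion_isUnit (hp : 1 ≤ p) (c : Fin p → ℂ) (hc0 : c ⟨0, hp⟩ ≠ 0) :
    IsUnit (companionOf p c) := by
  rw [← Matrix.mulVec_injective_iff_isUnit]
  have h0 : ∀ v : Fin p → ℂ, (companionOf p c).mulVec v = 0 → v = 0 := by
    intro v hv
    have hv0 : v ⟨0, hp⟩ = 0 := by
      have hlast := congrFun hv ⟨p - 1, by omega⟩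
      rw [companion_mulVec p hp c v ⟨p - 1, by omega⟩] at hlast
      rw [dif_neg (show ¬(p - 1 + 1 < p) from by omega)] at hlast
      have hrev : (⟨p - 1, by omega⟩ : Fin p).rev = ⟨0, hp⟩ := by
        apply Fin.ext
        rw [Fin.val_rev]
        show p - (p - 1 + 1) = 0
        omega
      rw [hrev, zero_add] at hlast
      simpa [Pi.zero_apply] using (mul_eq_zero.mp hlast).resolve_left hc0
    funext j
    rcases Nat.eq_zero_or_pos (j : ℕ) with hj | hj
    · have : j = ⟨0, hp⟩ := Fin.ext hj
      rw [this, hv0]; rfl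
    · obtain ⟨k, hk⟩ : ∃ k : ℕ, (j:ℕ) = k + 1 := ⟨(j:ℕ) - 1, by omega⟩
      have hkp : k + 1 < p := by have := j.isLt; omega
      have hrow := congrFun hv ⟨k, by omega⟩
      rw [companion_mulVec p hp c v ⟨k, by omega⟩] at hrow
      rw [dif_pos hkp, hv0, mul_zero, add_zero] at hrow
      have : j = ⟨k + 1, hkp⟩ := Fin.ext (show (j:ℕ) = k + 1 from by omega)
      rw [this]
      simpa using hrow
  intro v w hvw
  have : (companionOf p c).mulVec (v - w) = 0 := by
    rw [Matrix.mulVec_sub, hvw, sub_self]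
  have := h0 _ this
  funext j
  have := congrFun this j
  simpa [sub_eq_zero] using this



set_option synthInstance.maxHeartbeats 800000 in
set_option maxHeartbeats 1600000 in
lemma exists_log (p : ℕ) (C : Matrix (Fin p) (Fin p) ℂ) (hC : IsUnit C) :
    ∃ L : Matrix (Fin p) (Fin p) ℂ,
      exp L = C ∧ ∀ z : ℂ, ∃ q : ℂ[X], exp (z • L) = aeval C q := by
  letI : SeminormedRing (Matrix (Fin p) (Fin p) ℂ) := Matrix.linftyOpSemiNormedRing
  letI : NormedRing (Matrix (Fin p) (Fin p) ℂ) := Matrix.linftyOpNormedRing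
  letI : NormedAlgebra ℂ (Matrix (Fin p) (Fin p) ℂ) := Matrix.linftyOpNormedAlgebra
  set SA : Subalgebra ℂ (Matrix (Fin p) (Fin p) ℂ) := Algebra.adjoin ℂ {C} with hSA
  haveI hfin : FiniteDimensional ℂ ↥SA := inferInstance
  letI iNR : NormedRing ↥SA := SA.normedRing
  letI iNA : NormedAlgebra ℂ ↥SA := inferInstance
  letI iNQ : NormedAlgebra ℚ ↥SA := NormedAlgebra.restrictScalars ℚ ℂ ↥SA
  letI iTS : TopologicalSpace ↥SA := PseudoMetricSpace.toUniformSpace.toTopologicalSpace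
  -- commutativity of SA
  have hcomm : ∀ x y : ↥SA, x * y = y * x := by
    rintro ⟨x, hx⟩ ⟨y, hy⟩
    rw [hSA, Algebra.adjoin_singleton_eq_range_aeval] at hx hy
    obtain ⟨q, hq⟩ := hx
    obtain ⟨r, hr⟩ := hy
    apply Subtype.ext
    show x * y = y * x
    rw [← hq, ← hr, ← _root_.map_mul, ← _root_.map_mul, mul_comm]
  -- units of SA
  have hunit : ∀ x : ↥SA, IsUnit (x : Matrix (Fin p) (Fin p) ℂ) → IsUnit x := by
    intro x hx
    have hinj : Function.Injective (LinearMap.mulLeft ℂ x) := by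
      intro y z hyz
      have h2 : (x : Matrix (Fin p) (Fin p) ℂ) * (y : Matrix (Fin p) (Fin p) ℂ)
          = (x : Matrix (Fin p) (Fin p) ℂ) * (z : Matrix (Fin p) (Fin p) ℂ) := by
        have := congrArg (Subtype.val) hyz
        simpa [LinearMap.mulLeft_apply] using this
      exact Subtype.ext (hx.mul_left_cancel h2)
    have hsurj := (LinearMap.injective_iff_surjective (f := LinearMap.mulLeft ℂ x)).mp hinj
    obtain ⟨y, hy⟩ := hsurj 1
    exact ⟨⟨x, y, hy, by rw [hcomm]; exact hy⟩, rfl⟩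
  -- determinant polynomial along the segment from 1 to C
  set Mp : Matrix (Fin p) (Fin p) ℂ[X] :=
    Matrix.of (fun i j => Polynomial.C ((1 : Matrix (Fin p) (Fin p) ℂ) i j)
      + X * Polynomial.C ((C - 1) i j)) with hMp
  set d : ℂ[X] := Mp.det with hd
  have hEval : ∀ t : ℂ, eval t d = Matrix.det (1 + t • (C - 1)) := by
    intro t
    have h1 : (evalRingHom t) d = (Mp.map (evalRingHom t)).det := RingHom.map_det _ _
    have h2 : Mp.map (evalRingHom t) = 1 + t • (C - 1) := by
      ext i j
      simp only [Matrix.map_apply, hMp, Matrix.of_apply, coe_evalRingHom,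
        eval_add, eval_mul, eval_C, eval_X, Matrix.add_apply, Matrix.smul_apply, smul_eq_mul]
    rw [show eval t d = (evalRingHom t) d from rfl, h1, h2]
  have hd1 : eval 1 d ≠ 0 := by
    rw [hEval 1]
    have : (1 : Matrix (Fin p) (Fin p) ℂ) + (1:ℂ) • (C - 1) = C := by
      rw [one_smul]; abel
    rw [this]
    exact ((Matrix.isUnit_iff_isUnit_det C).mp hC).ne_zero
  have hd0 : eval 0 d = 1 := by
    rw [hEval 0, zero_smul, add_zero, Matrix.det_one]
  have hdne : d ≠ 0 := fun h => hd1 (by rw [h, eval_zero])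
  have hZfin : {t : ℂ | d.IsRoot t}.Finite := Polynomial.finite_setOf_isRoot hdne
  have hconn : IsPreconnected {t : ℂ | d.IsRoot t}ᶜ := by
    have hrank : 1 < Module.rank ℝ ℂ := by
      rw [Complex.rank_real_complex]; norm_num
    exact ((hZfin.countable.isPathConnected_compl_of_one_lt_rank hrank).isConnected).isPreconnected
  have hZopen : IsOpen {t : ℂ | d.IsRoot t}ᶜ := hZfin.isClosed.isOpen_compl
  -- the path inside SA
  set cC : ↥SA := ⟨C, Algebra.self_mem_adjoin_singleton ℂ C⟩ with hcC
  set γ : ℂ → ↥SA := fun t => 1 + t • (cC - 1) with hγ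
  have hγcont : Continuous γ := by
    apply continuous_const.add
    exact (continuous_id.smul continuous_const)
  have hγcoe : ∀ t : ℂ, (γ t : Matrix (Fin p) (Fin p) ℂ) = 1 + t • (C - 1) := by
    intro t; simp [hγ, hcC]
  have hγunit : ∀ t : ℂ, t ∈ {t : ℂ | d.IsRoot t}ᶜ → IsUnit (γ t) := by
    intro t ht
    refine hunit _ ?_
    rw [hγcoe, Matrix.isUnit_iff_isUnit_det, isUnit_iff_ne_zero, ← hEval]
    exact ht
  -- the range of exp on SA
  set H : Set ↥SA := Set.range (exp) with hH
  have hHmul : ∀ a b : ↥SA, a ∈ H → b ∈ H → a * b ∈ H := by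
    rintro a b ⟨x, rfl⟩ ⟨y, rfl⟩
    exact ⟨x + y, exp_add_of_commute (hcomm x y)⟩
  -- a small ball around 1 is contained in H
  have hfd : HasStrictFDerivAt (exp : ↥SA → ↥SA)
      ((ContinuousLinearEquiv.refl ℂ ↥SA : ↥SA ≃L[ℂ] ↥SA) : ↥SA →L[ℂ] ↥SA) 0 := by
    exact hasStrictFDerivAt_exp_zero (𝕂 := ℂ) (𝔸 := ↥SA)
  set e := hfd.toOpenPartialHomeomorph _ with he
  have hsource : (0 : ↥SA) ∈ e.source := hfd.mem_toOpenPartialHomeomorph_source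
  have htarget : (1 : ↥SA) ∈ e.target := by
    have h1 := e.map_source hsource
    have h2 : e 0 = (1 : ↥SA) := by
      rw [he]
      show (hfd.toOpenPartialHomeomorph _ : ↥SA → ↥SA) 0 = 1
      rw [hfd.toOpenPartialHomeomorph_coe]
      exact exp_zero
    rwa [h2] at h1
  obtain ⟨ε, hε, hball⟩ := Metric.isOpen_iff.mp e.open_target 1 htarget
  have hball' : ∀ y : ↥SA, ‖y - 1‖ < ε → y ∈ H := by
    intro y hy
    have hyt : y ∈ e.target := hball (by rwa [Metric.mem_ball, dist_eq_norm])
    refine ⟨e.symm y, ?_⟩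
    have hcoe : ⇑e = exp := by rw [he]; exact hfd.toOpenPartialHomeomorph_coe
    rw [← hcoe]
    exact e.right_inv hyt
  -- translation lemma
  have key : ∀ (b : ↥SA) (u : (↥SA)ˣ), (↑u : ↥SA) ∈ H → ‖b * ↑u⁻¹ - 1‖ < ε → b ∈ H := by
    intro b u hu hub
    have h1 : b * ↑u⁻¹ ∈ H := hball' _ hub
    have h2 : (b * ↑u⁻¹) * ↑u = b := by
      rw [mul_assoc, Units.inv_mul, mul_one]
    rw [← h2]
    exact hHmul _ _ h1 hu
  -- the two relatively open pieces
  set U : Set ℂ := {t | t ∈ {t : ℂ | d.IsRoot t}ᶜ ∧ γ t ∈ H} with hU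
  set V : Set ℂ := {t | t ∈ {t : ℂ | d.IsRoot t}ᶜ ∧ γ t ∉ H} with hV
  have hUopen : IsOpen U := by
    rw [isOpen_iff_mem_nhds]
    rintro t₀ ⟨ht₀, hmem⟩
    set u := (hγunit t₀ ht₀).unit with hu
    have huval : (↑u : ↥SA) = γ t₀ := (hγunit t₀ ht₀).unit_spec
    have hcont : ContinuousAt (fun t => γ t * ↑u⁻¹) t₀ :=
      (hγcont.mul continuous_const).continuousAt
    have hval : γ t₀ * ↑u⁻¹ = 1 := by rw [← huval, Units.mul_inv]
    have h2 : Filter.Tendsto (fun t => γ t * ↑u⁻¹) (nhds t₀) (nhds 1) := by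
      rw [← hval]; exact hcont
    have hnear : ∀ᶠ t in nhds t₀, dist (γ t * ↑u⁻¹) 1 < ε :=
      Metric.tendsto_nhds.mp h2 ε hε
    have hZev : ∀ᶠ t in nhds t₀, t ∈ {t : ℂ | d.IsRoot t}ᶜ := hZopen.mem_nhds ht₀
    filter_upwards [hnear, hZev] with t h1 h2'
    exact ⟨h2', key (γ t) u (by rw [huval]; exact hmem) (by rwa [dist_eq_norm] at h1)⟩
  have hVopen : IsOpen V := by
    rw [isOpen_iff_mem_nhds]
    rintro t₀ ⟨ht₀, hmem⟩
    set u := (hγunit t₀ ht₀).unit with hu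
    have huval : (↑u : ↥SA) = γ t₀ := (hγunit t₀ ht₀).unit_spec
    have hinv : ContinuousAt Ring.inverse (↑u : ↥SA) := NormedRing.inverse_continuousAt u
    have hcont : ContinuousAt (fun t => γ t₀ * Ring.inverse (γ t)) t₀ := by
      apply ContinuousAt.mul continuousAt_const
      exact (ContinuousAt.comp (by rwa [huval] at hinv) hγcont.continuousAt :
        ContinuousAt (Ring.inverse ∘ γ) t₀)
    have hval : γ t₀ * Ring.inverse (γ t₀) = 1 := Ring.mul_inverse_cancel _ (hγunit t₀ ht₀)
    have h2 : Filter.Tendsto (fun t => γ t₀ * Ring.inverse (γ t)) (nhds t₀) (nhds 1) := by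
      rw [← hval]; exact hcont
    have hnear : ∀ᶠ t in nhds t₀, dist (γ t₀ * Ring.inverse (γ t)) 1 < ε :=
      Metric.tendsto_nhds.mp h2 ε hε
    have hZev : ∀ᶠ t in nhds t₀, t ∈ {t : ℂ | d.IsRoot t}ᶜ := hZopen.mem_nhds ht₀
    filter_upwards [hnear, hZev] with t h1 h2'
    refine ⟨h2', fun hmem' => hmem ?_⟩
    have hwval : (↑(hγunit t h2').unit : ↥SA) = γ t := (hγunit t h2').unit_spec
    have hiw : Ring.inverse (γ t) = (↑(hγunit t h2').unit⁻¹ : ↥SA) := by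
      have h3 := Ring.inverse_unit ((hγunit t h2').unit)
      rw [hwval] at h3
      exact h3
    refine key (γ t₀) (hγunit t h2').unit (by rw [hwval]; exact hmem') ?_
    rw [← hiw]
    rwa [dist_eq_norm] at h1
  have hsub : {t : ℂ | d.IsRoot t}ᶜ ⊆ U ∪ V := by
    intro t ht
    by_cases h : γ t ∈ H
    · exact Or.inl ⟨ht, h⟩
    · exact Or.inr ⟨ht, h⟩
  have h0mem : (0:ℂ) ∈ {t : ℂ | d.IsRoot t}ᶜ := by
    intro h
    have h2 : eval 0 d = 0 := h
    rw [hd0] at h2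
    exact one_ne_zero h2
  have h1mem : (1:ℂ) ∈ {t : ℂ | d.IsRoot t}ᶜ := fun h => hd1 h
  have h0U : (0:ℂ) ∈ U := by
    refine ⟨h0mem, ?_⟩
    have hγ0 : γ 0 = 1 := by rw [hγ]; simp
    rw [hγ0]
    exact ⟨0, exp_zero⟩
  have h1U : (1:ℂ) ∈ U := by
    by_contra h1V
    have h1V' : (1:ℂ) ∈ V := by
      cases hsub h1mem with
      | inl h => exact absurd h h1V
      | inr h => exact h
    obtain ⟨t, ht⟩ := hconn U V hUopen hVopen hsub ⟨0, h0mem, h0U⟩ ⟨1, h1mem, h1V'⟩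
    exact ht.2.2.2 ht.2.1.2
  obtain ⟨s, hs⟩ := h1U.2
  have hγ1 : γ 1 = cC := by
    rw [hγ]
    show 1 + (1:ℂ) • (cC - 1) = cC
    rw [one_smul]; abel
  have hcontval : Continuous (SA.val : ↥SA →ₐ[ℂ] Matrix (Fin p) (Fin p) ℂ) :=
    continuous_subtype_val
  have hmap : ∀ x : ↥SA, exp (x : Matrix (Fin p) (Fin p) ℂ)
      = ((exp x : ↥SA) : Matrix (Fin p) (Fin p) ℂ) :=
    fun x => (map_exp (SA.val : ↥SA →ₐ[ℂ] Matrix (Fin p) (Fin p) ℂ) hcontval x).symm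
  refine ⟨(s : Matrix (Fin p) (Fin p) ℂ), ?_, ?_⟩
  · rw [hmap s, hs, hγ1, hcC]
  · intro z
    have hzsmul : z • (s : Matrix (Fin p) (Fin p) ℂ)
        = ((z • s : ↥SA) : Matrix (Fin p) (Fin p) ℂ) := rfl
    rw [hzsmul, hmap (z • s)]
    have hmem2 : ((exp (z • s) : ↥SA) : Matrix (Fin p) (Fin p) ℂ) ∈ (aeval (R := ℂ) C).range := by
      rw [← Algebra.adjoin_singleton_eq_range_aeval ℂ C]
      exact (exp (z • s) : ↥SA).2
    obtain ⟨q, hq⟩ := hmem2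
    exact ⟨q, hq.symm⟩

end CFlowAux

open Polynomial NormedSpace Matrix

/-- if `Q = X^p − c_{p−1}X^{p−1} − ⋯ − c_0` satisfies `Q(A) = 0` and
`c_0 ≠ 0`, with companion matrix `C_Q` and `c = (c_{p−1}, …, c_0)` (the vector
`fun j => c j.rev`), then there exist a C-flow `φ` of `A` and a C-flow `ψ` of `C_Q`, both
with differentiable entry functions, such that `φ(z) = Σ_{i=1}^p (ψ(z)·c)_i A^{−i}` for all
`z ∈ ℂ` (zero-based: `i : Fin p` corresponds to `A^{−1−i}`). -/
theorem exists_C_flows_main (n : ℕ) (hn : 1 ≤ n)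
    (A : Matrix (Fin n) (Fin n) ℂ) (hA : IsUnit A) (p : ℕ) (hp : 1 ≤ p)
    (c : Fin p → ℂ) (hc0 : c ⟨0, hp⟩ ≠ 0)
    (hQ : Polynomial.aeval A
      (Polynomial.X ^ p - ∑ i : Fin p, Polynomial.C (c i) * Polynomial.X ^ (i : ℕ)) = 0) :
    ∃ (φ : ℂ → Matrix (Fin n) (Fin n) ℂ) (ψ : ℂ → Matrix (Fin p) (Fin p) ℂ),
      (∀ z w : ℂ, φ (z + w) = φ z * φ w) ∧ φ 0 = 1 ∧ φ 1 = A ∧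
      (∀ i j : Fin n, Differentiable ℂ (fun z : ℂ => φ z i j)) ∧
      (∀ z w : ℂ, ψ (z + w) = ψ z * ψ w) ∧ ψ 0 = 1 ∧ ψ 1 = companionOf p c ∧
      (∀ i j : Fin p, Differentiable ℂ (fun z : ℂ => ψ z i j)) ∧
      ∀ z : ℂ,
        φ z = ∑ i : Fin p, (ψ z).mulVec (fun j : Fin p => c j.rev) i • A ^ (-1 - (i : ℤ)) := by
  classical
  set C := companionOf p c with hCdef
  have hdetA : IsUnit A.det := (Matrix.isUnit_iff_isUnit_det A).mp hA
  have hCunit : IsUnit C := CFlowAux.companion_isUnit hp c hc0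
  have h1 : A ^ p = ∑ i : Fin p, c i • A ^ (i:ℕ) := by
    have h2 := hQ
    rw [map_sub, map_pow, aeval_X, map_sum, sub_eq_zero] at h2
    rw [h2]
    refine Finset.sum_congr rfl (fun i _ => ?_)
    rw [_root_.map_mul, aeval_C, map_pow, aeval_X, Algebra.smul_def]
  obtain ⟨L, hL1, hL2⟩ := CFlowAux.exists_log p C hCunit
  set ψ : ℂ → Matrix (Fin p) (Fin p) ℂ := fun z => exp (z • L) with hψ
  set φ : ℂ → Matrix (Fin n) (Fin n) ℂ :=
    fun z => ∑ i : Fin p, (ψ z).mulVec (fun j : Fin p => c j.rev) i • A ^ (-1 - (i:ℤ)) with hφ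
  have hGq := CFlowAux.G_aeval A hdetA hp c h1
  have hψflow : ∀ z w : ℂ, ψ (z + w) = ψ z * ψ w := by
    intro z w
    show exp ((z + w) • L) = exp (z • L) * exp (w • L)
    rw [add_smul]
    exact Matrix.exp_add_of_commute _ _ (((Commute.refl L).smul_left z).smul_right w)
  have hψ0 : ψ 0 = 1 := by
    show exp ((0:ℂ) • L) = 1
    rw [zero_smul, exp_zero]
  have hψ1 : ψ 1 = C := by
    show exp ((1:ℂ) • L) = C
    rw [one_smul, hL1]
  have hψd : ∀ i j : Fin p, Differentiable ℂ (fun z : ℂ => ψ z i j) := by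
    letI : SeminormedRing (Matrix (Fin p) (Fin p) ℂ) := Matrix.linftyOpSemiNormedRing
    letI : NormedRing (Matrix (Fin p) (Fin p) ℂ) := Matrix.linftyOpNormedRing
    letI : NormedAlgebra ℂ (Matrix (Fin p) (Fin p) ℂ) := Matrix.linftyOpNormedAlgebra
    have hdiff : Differentiable ℂ ψ := fun t =>
      (hasDerivAt_exp_smul_const (𝕂 := ℂ) L t).differentiableAt
    intro i j
    let eLin : Matrix (Fin p) (Fin p) ℂ →ₗ[ℂ] ℂ :=
      { toFun := fun M => M i j
        map_add' := fun M N => rfl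
        map_smul' := fun a M => rfl }
    exact ((LinearMap.toContinuousLinearMap eLin).differentiable).comp hdiff
  have hφflow : ∀ z w : ℂ, φ (z + w) = φ z * φ w := by
    intro z w
    obtain ⟨qz, hqz⟩ := hL2 z
    obtain ⟨qw, hqw⟩ := hL2 w
    show (∑ i : Fin p, (ψ (z+w)).mulVec (fun j : Fin p => c j.rev) i • A ^ (-1 - (i:ℤ)))
      = (∑ i : Fin p, (ψ z).mulVec (fun j : Fin p => c j.rev) i • A ^ (-1 - (i:ℤ)))
        * (∑ i : Fin p, (ψ w).mulVec (fun j : Fin p => c j.rev) i • A ^ (-1 - (i:ℤ)))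
    have hzw : ψ (z + w) = aeval C (qz * qw) := by
      rw [hψflow z w, _root_.map_mul, ← hqz, ← hqw]
    rw [hzw]
    show _ = _
    rw [hGq (qz * qw), _root_.map_mul]
    have e1 : ψ z = aeval C qz := hqz
    have e2 : ψ w = aeval C qw := hqw
    rw [e1, e2, hGq qz, hGq qw]
  have hφ0 : φ 0 = 1 := by
    show (∑ i : Fin p, (ψ 0).mulVec (fun j : Fin p => c j.rev) i • A ^ (-1 - (i:ℤ))) = 1
    have : ψ 0 = aeval C (1 : ℂ[X]) := by rw [hψ0, _root_.map_one]
    rw [this, hGq (1 : ℂ[X]), _root_.map_one]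
  have hφ1 : φ 1 = A := by
    show (∑ i : Fin p, (ψ 1).mulVec (fun j : Fin p => c j.rev) i • A ^ (-1 - (i:ℤ))) = A
    have : ψ 1 = aeval C (X : ℂ[X]) := by rw [hψ1, aeval_X]
    rw [this, hGq (X : ℂ[X]), aeval_X]
  have hφd : ∀ i j : Fin n, Differentiable ℂ (fun z : ℂ => φ z i j) := by
    intro i j
    have heq : (fun z : ℂ => φ z i j)
        = fun z : ℂ => ∑ k : Fin p, (∑ l : Fin p, ψ z k l * c l.rev) * (A ^ (-1 - (k:ℤ))) i j := by
      funext z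
      show (∑ k : Fin p, (ψ z).mulVec (fun j : Fin p => c j.rev) k • A ^ (-1 - (k:ℤ))) i j = _
      rw [Matrix.sum_apply]
      refine Finset.sum_congr rfl fun k _ => ?_
      rw [Matrix.smul_apply, smul_eq_mul]
      congr 1
    rw [heq]
    apply Differentiable.fun_sum
    intro k _
    apply Differentiable.mul ?_ (differentiable_const _)
    apply Differentiable.fun_sum
    intro l _
    exact (hψd k l).mul (differentiable_const _)
  exact ⟨φ, ψ, hφflow, hφ0, hφ1, hφd, hψflow, hψ0, hψ1, hψd, fun z => rfl⟩
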